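/- Let ω : ℝ → ℝ^ν and x : ℝ → ℝ^n be differentiable functions satisfying ω'(t) = Sω(t) and x'(t) = Ax(t) + P·L·ω(t) for all t, and let Π ∈ ℝ^{n×ν} satisfy the Sylvester equation ΠS = AΠ + PL. If x(0) = Πω(0), then x(t) = Πω(t) for all t ∈ ℝ, and consequently the output y(t) := Cx(t) + Q·L·ω(t) satisfies y(t) = (CΠ + QL)ω(t) for all t ∈ ℝ (i.e., on the invariant manifold the input–output behavior is given by the moment CΠ + QL). -/

import Mathlib

open Matrix

/-- If `ω' = Sω`, `x' = Ax + PLω`, `Π` solves the Sylvester equation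
`ΠS = AΠ + PL`, and `x(0) = Πω(0)`, then `x(t) = Πω(t)` for all `t`, and the output
`y(t) = Cx(t) + QLω(t)` satisfies `y(t) = (CΠ + QL)ω(t)` for all `t`. -/
theorem moment_on_invariant_manifold (n p q ν : ℕ)
    (A : Matrix (Fin n) (Fin n) ℝ) (C : Matrix (Fin p) (Fin n) ℝ)
    (P : Matrix (Fin n) (Fin q) ℝ) (Q : Matrix (Fin p) (Fin q) ℝ)
    (S : Matrix (Fin ν) (Fin ν) ℝ) (L : Matrix (Fin q) (Fin ν) ℝ)
    (ω : ℝ → Fin ν → ℝ) (x : ℝ → Fin n → ℝ)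
    (hω : ∀ t : ℝ, HasDerivAt ω (S.mulVec (ω t)) t)
    (hx : ∀ t : ℝ, HasDerivAt x (A.mulVec (x t) + (P * L).mulVec (ω t)) t)
    (Pi : Matrix (Fin n) (Fin ν) ℝ)
    (hPi : Pi * S = A * Pi + P * L)
    (h0 : x 0 = Pi.mulVec (ω 0)) :
    (∀ t : ℝ, x t = Pi.mulVec (ω t)) ∧
    (∀ t : ℝ, C.mulVec (x t) + (Q * L).mulVec (ω t) = (C * Pi + Q * L).mulVec (ω t)) := by
  -- main part
  have key : ∀ t : ℝ, x t = Pi.mulVec (ω t) := by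
    set Ac : (Fin n → ℝ) →L[ℝ] (Fin n → ℝ) := LinearMap.toContinuousLinearMap A.mulVecLin
    set Pc : (Fin ν → ℝ) →L[ℝ] (Fin n → ℝ) := LinearMap.toContinuousLinearMap Pi.mulVecLin
    have hg : ∀ t : ℝ, HasDerivAt (fun t => Pi.mulVec (ω t))
        (A.mulVec (Pi.mulVec (ω t)) + (P * L).mulVec (ω t)) t := by
      intro t
      have := Pc.hasFDerivAt.comp_hasDerivAt t (hω t)
      have h2 : Pc (S.mulVec (ω t)) = A.mulVec (Pi.mulVec (ω t)) + (P * L).mulVec (ω t) := by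
        simp only [Pc, LinearMap.coe_toContinuousLinearMap', mulVecLin_apply]
        rw [mulVec_mulVec, hPi, add_mulVec, mulVec_mulVec]
      rw [h2] at this
      exact this
    intro t
    have hv : ∀ s : ℝ, LipschitzWith ‖Ac‖₊ (fun y => A.mulVec y + (P * L).mulVec (ω s)) := by
      intro s
      have : LipschitzWith ‖Ac‖₊ (fun y : Fin n → ℝ => Ac y + (P*L).mulVec (ω s)) :=
        LipschitzWith.of_dist_le_mul fun a b => by
          rw [dist_add_right]; exact Ac.lipschitz.dist_le_mul a b
      simpa [Ac] using this
    rcases lt_trichotomy t 0 with h | h | h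
    · exact ODE_solution_unique_of_mem_Icc_left
        (fun s _ => (hv s).lipschitzOnWith (s := Set.univ))
        (fun s hs => (hx s).continuousAt.continuousWithinAt)
        (fun s hs => (hx s).hasDerivWithinAt) (fun _ _ => trivial)
        (fun s hs => (hg s).continuousAt.continuousWithinAt)
        (fun s hs => (hg s).hasDerivWithinAt) (fun _ _ => trivial)
        h0 ⟨le_refl t, h.le⟩
    · rw [h]; exact h0
    · exact ODE_solution_unique_of_mem_Icc_right
        (fun s _ => (hv s).lipschitzOnWith (s := Set.univ))
        (fun s hs => (hx s).continuousAt.continuousWithinAt)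
        (fun s hs => (hx s).hasDerivWithinAt) (fun _ _ => trivial)
        (fun s hs => (hg s).continuousAt.continuousWithinAt)
        (fun s hs => (hg s).hasDerivWithinAt) (fun _ _ => trivial)
        h0 ⟨h.le, le_refl t⟩
  refine ⟨key, fun t => ?_⟩
  rw [key t, add_mulVec, mulVec_mulVec]
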